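/- Let q be a prime power, m a positive integer, and U an F_q-linear subspace of F_{q^m}. Then the polynomial ∏_{α ∈ U} (x - α) is a linearized polynomial over F_{q^m}, i.e., all of its nonzero coefficients occur only in degrees that are powers of q, and it has the form ∑_{j} c_j x^{q^{d-j}} where q^d = |U|. -/

import Mathlib

open Finset Polynomial

section Aux

variable {K : Type*} [Field K]

/-- Auxiliary recursively defined linearized polynomial killing the span of `β 0, …, β (i-1)`. -/
noncomputable def Lpoly (q : ℕ) (β : ℕ → K) : ℕ → K[X]
  | 0 => X
  | (i+1) => (Lpoly q β i) ^ q - C ((Lpoly q β i).eval (β i) ^ (q - 1)) * Lpoly q β i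

lemma Lpoly_monic_natDegree (q : ℕ) (hq : 2 ≤ q) (β : ℕ → K) (i : ℕ) :
    (Lpoly q β i).Monic ∧ (Lpoly q β i).natDegree = q ^ i := by
  induction i with
  | zero => simpa [Lpoly] using monic_X
  | succ i ih =>
    obtain ⟨hm, hdeg⟩ := ih
    have hdegpow : ((Lpoly q β i) ^ q).natDegree = q ^ (i+1) := by
      rw [natDegree_pow, hdeg, pow_succ, mul_comm]
    have hmonpow : ((Lpoly q β i) ^ q).Monic := hm.pow q
    have hnatlt : (C ((Lpoly q β i).eval (β i) ^ (q - 1)) * Lpoly q β i).natDegree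
        < ((Lpoly q β i) ^ q).natDegree := by
      apply lt_of_le_of_lt (natDegree_C_mul_le _ _)
      rw [hdeg, hdegpow]
      exact Nat.pow_lt_pow_right (by omega) (Nat.lt_succ_self i)
    have hlt : (C ((Lpoly q β i).eval (β i) ^ (q - 1)) * Lpoly q β i).degree
        < ((Lpoly q β i) ^ q).degree := by
      have h1 : (C ((Lpoly q β i).eval (β i) ^ (q - 1)) * Lpoly q β i).degree
          ≤ (Lpoly q β i).degree := by
        refine (degree_mul_le _ _).trans ?_
        have h0 := add_le_add_left
          (degree_C_le (a := (Lpoly q β i).eval (β i) ^ (q - 1))) (Lpoly q β i).degree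
        simpa using h0
      have h2 : (Lpoly q β i).natDegree < ((Lpoly q β i) ^ q).natDegree := by
        rw [hdeg, hdegpow]
        exact Nat.pow_lt_pow_right (by omega) (Nat.lt_succ_self i)
      exact lt_of_le_of_lt h1 (degree_lt_degree h2)
    constructor
    · rw [Lpoly]
      exact hmonpow.sub_of_left hlt
    · rw [Lpoly, natDegree_sub_eq_left_of_natDegree_lt hnatlt, hdegpow]

lemma Lpoly_form (p k q : ℕ) [Fact p.Prime] [CharP K p] (hq : q = p ^ k) (β : ℕ → K) (i : ℕ) :
    ∃ c : ℕ → K, c 0 = 1 ∧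
      Lpoly q β i = ∑ j ∈ Finset.range (i+1), C (c j) * X ^ (q ^ (i - j)) := by
  induction i with
  | zero => exact ⟨fun _ => 1, rfl, by simp [Lpoly]⟩
  | succ i ih =>
    obtain ⟨c, hc0, hL⟩ := ih
    set γ : K := (Lpoly q β i).eval (β i) ^ (q - 1) with hγ
    refine ⟨fun j => (if j ≤ i then c j ^ q else 0) - (if 1 ≤ j then γ * c (j-1) else 0),
      by simp [hc0], ?_⟩
    have hpow : (Lpoly q β i) ^ q
        = ∑ j ∈ Finset.range (i+1), C (c j ^ q) * X ^ (q ^ (i + 1 - j)) := by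
      rw [hL, hq]
      rw [sum_pow_char_pow]
      refine Finset.sum_congr rfl fun j hj => ?_
      rw [Finset.mem_range] at hj
      rw [mul_pow, ← C_pow, ← pow_mul, ← pow_succ, ← Nat.sub_add_comm (by omega)]
    have hmul : C γ * Lpoly q β i
        = ∑ j ∈ Finset.range (i+1), C (γ * c j) * X ^ (q ^ (i - j)) := by
      rw [hL, Finset.mul_sum]
      refine Finset.sum_congr rfl fun j hj => ?_
      rw [← mul_assoc, ← C_mul]
    rw [Lpoly, hpow, hmul]
    simp only [C_sub, sub_mul]
    rw [Finset.sum_sub_distrib]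
    congr 1
    · -- first sum: extend to range (i+2), last term is 0
      conv_rhs => rw [Finset.sum_range_succ]
      rw [if_neg (by omega), C_0, zero_mul, add_zero]
      refine Finset.sum_congr rfl fun j hj => ?_
      rw [Finset.mem_range] at hj
      rw [if_pos (by omega)]
    · -- second sum: shift index
      conv_rhs => rw [Finset.sum_range_succ']
      rw [if_neg (by omega), C_0, zero_mul, add_zero]
      refine Finset.sum_congr rfl fun j hj => ?_
      rw [if_pos (by omega)]
      simp

variable {Fq : Type*} [Field Fq] [Fintype Fq] [Algebra Fq K]

lemma algebraMap_pow_card_pow (e : ℕ) (a : Fq) :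
    (algebraMap Fq K a) ^ (Fintype.card Fq) ^ e = algebraMap Fq K a := by
  rw [← map_pow, FiniteField.pow_card_pow]

/-- the evaluation of a linearized polynomial, as an `Fq`-linear map. -/
noncomputable def linEval (p k : ℕ) [Fact p.Prime] [CharP K p]
    (hq : Fintype.card Fq = p ^ k) (c : ℕ → K) (s : ℕ) (e : ℕ → ℕ) : K →ₗ[Fq] K where
  toFun x := (∑ j ∈ Finset.range s, C (c j) * X ^ ((Fintype.card Fq) ^ (e j))).eval x
  map_add' x y := by
    simp only [eval_finset_sum, eval_mul, eval_pow, eval_C, eval_X, ← Finset.sum_add_distrib]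
    refine Finset.sum_congr rfl fun j _ => ?_
    rw [hq, ← pow_mul, add_pow_char_pow, mul_add, pow_mul]
  map_smul' a x := by
    simp only [eval_finset_sum, eval_mul, eval_pow, eval_C, eval_X, RingHom.id_apply,
      Algebra.smul_def, Finset.mul_sum]
    refine Finset.sum_congr rfl fun j _ => ?_
    rw [mul_pow, algebraMap_pow_card_pow]
    ring

lemma Lpoly_vanish (p k : ℕ) [Fact p.Prime] [CharP K p]
    (hq : Fintype.card Fq = p ^ k) (β : ℕ → K) (i : ℕ) :
    ∀ x ∈ Submodule.span Fq (β '' Set.Iio i), (Lpoly (Fintype.card Fq) β i).eval x = 0 := by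
  set q : ℕ := Fintype.card Fq with hqdef
  have hq1 : 1 ≤ q := Fintype.card_pos
  induction i with
  | zero =>
    intro x hx
    have : (Set.Iio 0 : Set ℕ) = ∅ := by ext j; simp
    rw [this, Set.image_empty, Submodule.span_empty, Submodule.mem_bot] at hx
    subst hx; simp [Lpoly]
  | succ i ih =>
    intro x hx
    obtain ⟨c, hc0, hL⟩ := Lpoly_form p k q hq β i
    -- the linear map given by evaluation of Lpoly q β i
    let φ : K →ₗ[Fq] K := linEval p k hq c (i+1) (fun j => i - j)
    have hφ : ∀ y : K, φ y = (Lpoly q β i).eval y := fun y => by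
      simp only [φ, linEval, LinearMap.coe_mk, AddHom.coe_mk, ← hqdef, ← hL]
    have hIio : (Set.Iio (i+1) : Set ℕ) = insert i (Set.Iio i) := by ext j; simp
    rw [hIio, Set.image_insert_eq, Submodule.mem_span_insert] at hx
    obtain ⟨a, z, hz, rfl⟩ := hx
    set γ : K := (Lpoly q β i).eval (β i) with hγ
    have hevalz : (Lpoly q β i).eval z = 0 := ih z hz
    have heval : (Lpoly q β i).eval (a • β i + z) = algebraMap Fq K a * γ := by
      rw [← hφ, map_add, map_smul, hφ, hφ, hevalz, add_zero, Algebra.smul_def]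
    rw [Lpoly]
    simp only [eval_sub, eval_pow, eval_mul, eval_C, heval]
    have hAq : (algebraMap Fq K a) ^ q = algebraMap Fq K a := by
      simpa using algebraMap_pow_card_pow (K := K) 1 a
    rw [mul_pow, hAq, mul_comm (γ ^ (q-1)), mul_assoc, ← pow_succ', Nat.sub_add_cancel hq1]
    ring

end Aux

/-- for an `F_q`-linear subspace `U` of `F_{q^m}` with `|U| = q^d`, the polynomial
`∏_{α ∈ U} (X - α)` is a linearized polynomial: it has the form `∑_j c_j X^{q^{d-j}}`
(so all nonzero coefficients occur only in degrees that are powers of `q`). -/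
theorem prod_subspace_linearized {Fq K : Type*} [Field Fq] [Fintype Fq] [Field K] [Fintype K]
    [Algebra Fq K] (q m d : ℕ) (hq : Fintype.card Fq = q) (hm : 0 < m)
    (hK : Fintype.card K = q ^ m)
    (U : Submodule Fq K) [DecidablePred (· ∈ U)] (hd : Nat.card U = q ^ d) :
    ∃ c : Fin (d+1) → K,
      ∏ β ∈ Finset.univ.filter (· ∈ U), (Polynomial.X - Polynomial.C β) =
        ∑ j : Fin (d+1), Polynomial.C (c j) * Polynomial.X ^ q ^ (d - (j:ℕ)) := by
  classical
  subst hq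
  set q : ℕ := Fintype.card Fq with hqdef
  -- characteristic setup
  set p : ℕ := ringChar Fq with hp
  haveI : CharP Fq p := ringChar.charP Fq
  obtain ⟨k, hpprime, hcard⟩ := FiniteField.card Fq p
  haveI : Fact p.Prime := ⟨hpprime⟩
  haveI : CharP K p := charP_of_injective_algebraMap (algebraMap Fq K).injective p
  have hq2 : 2 ≤ q := Fintype.one_lt_card
  -- basis of U
  haveI : Finite ↥U := Subtype.finite
  haveI : Module.Finite Fq ↥U := Module.Finite.of_finite
  set n : ℕ := Module.finrank Fq ↥U with hn
  let b : Module.Basis (Fin n) Fq ↥U := Module.finBasis Fq ↥U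
  set β : ℕ → K := fun j => if h : j < n then (b ⟨j, h⟩ : K) else 0 with hβ
  -- d = n
  have hcardU : Fintype.card ↥U = q ^ n := Module.card_eq_pow_finrank
  have hdn : d = n := by
    have : q ^ d = q ^ n := by rw [← hd, Nat.card_eq_fintype_card, hcardU]
    exact Nat.pow_right_injective hq2 this
  subst hdn
  -- the span of β '' Iio n is U
  have hspan : Submodule.span Fq (β '' Set.Iio n) = U := by
    have himg : β '' Set.Iio n = (U.subtype) '' (Set.range b) := by
      ext y
      constructor
      · rintro ⟨j, hj, rfl⟩
        simp only [Set.mem_Iio] at hj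
        exact ⟨b ⟨j, hj⟩, ⟨⟨j, hj⟩, rfl⟩, by simp [hβ, dif_pos hj]⟩
      · rintro ⟨u, ⟨j, rfl⟩, rfl⟩
        exact ⟨j.1, Set.mem_Iio.2 j.2, by simp [hβ, dif_pos j.2]⟩
    rw [himg, Submodule.span_image, b.span_eq, Submodule.map_top, Submodule.range_subtype]
  -- the linearized polynomial
  set L : K[X] := Lpoly q β n with hLdef
  obtain ⟨hmonic, hdeg⟩ := Lpoly_monic_natDegree q hq2 β n
  have hL0 : L ≠ 0 := hmonic.ne_zero
  have hvanish : ∀ x ∈ U, L.eval x = 0 := by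
    intro x hx
    exact Lpoly_vanish p k hcard β n x (by rwa [hspan])
  -- divisibility of the product by L
  set s : Finset K := Finset.univ.filter (· ∈ U) with hs
  have hcards : s.card = q ^ n := by
    rw [hs, ← Fintype.card_subtype, hcardU]
  have hle : s.val ≤ L.roots := by
    rw [Multiset.le_iff_count]
    intro a
    by_cases ha : a ∈ s
    · have h1 : s.val.count a = 1 := Multiset.count_eq_one_of_mem s.nodup ha
      have ha' : a ∈ U := by simpa [hs] using ha
      have h2 : 1 ≤ L.roots.count a := by
        rw [Polynomial.count_roots]
        exact (Polynomial.rootMultiplicity_pos hL0).2 (hvanish a ha')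
      omega
    · rw [Multiset.count_eq_zero.2 (by simpa using ha)]
      omega
  have hdvd : (s.val.map fun a => X - C a).prod ∣ L :=
    (Multiset.prod_X_sub_C_dvd_iff_le_roots hL0 s.val).2 hle
  have hmonicprod : ((s.val.map fun a => X - C a).prod).Monic :=
    monic_multiset_prod_of_monic _ _ fun a _ => monic_X_sub_C a
  have hdegprod : ((s.val.map fun a => X - C a).prod).natDegree = q ^ n := by
    rw [Polynomial.natDegree_multiset_prod_X_sub_C_eq_card]
    exact hcards
  have hEq : L = (s.val.map fun a => X - C a).prod := by
    apply Polynomial.eq_of_monic_of_dvd_of_natDegree_le hmonicprod hmonic hdvd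
    rw [hdegprod, hdeg]
  have hprodeq : ∏ β ∈ s, (X - C β) = L := by
    rw [Finset.prod_eq_multiset_prod, ← hEq]
  obtain ⟨c, hc0, hLform⟩ := Lpoly_form p k q hcard β n
  refine ⟨fun j => c j, ?_⟩
  rw [hprodeq, hLdef, hLform, Fin.sum_univ_eq_sum_range (fun j => C (c j) * X ^ q ^ (n - j)) (n+1)]
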